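/- Let 𝓛 be a thicket on S and let M ∈ 𝓜̄_𝓛. Then type(M) is an S-tree: its elements are pairwise nested or disjoint, and S ∈ type(M). -/

import Mathlib

variable {α : Type*} [DecidableEq α]

/-- A thicket on `S`: a collection `L` of subsets of `S` containing `S`, whose
members have size at least 2, closed under unions of intersecting members. -/
def IsThicket (S : Finset α) (L : Finset (Finset α)) : Prop :=
  S ∈ L ∧ (∀ T ∈ L, T ⊆ S) ∧ (∀ T ∈ L, 2 ≤ T.card) ∧
    ∀ U ∈ L, ∀ V ∈ L, (U ∩ V).Nonempty → U ∪ V ∈ L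

noncomputable section

/-- The subspace of constant functions in `F(T, ℂ) = (T → ℂ)`. -/
def constSub (T : Finset α) : Submodule ℂ (↥T → ℂ) :=
  Submodule.span ℂ {fun _ => 1}

/-- `V_T = F(T, ℂ)/C_T`. -/
abbrev Vspace (T : Finset α) : Type _ := (↥T → ℂ) ⧸ constSub T

/-- Restriction of functions, as a linear map `F(T,ℂ) → F(U,ℂ)` for `U ⊆ T`. -/
def restr (U T : Finset α) (h : U ⊆ T) : (↥T → ℂ) →ₗ[ℂ] (↥U → ℂ) :=
  LinearMap.funLeft ℂ ℂ (fun u => ⟨u.1, h u.2⟩)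

/-- The induced map `π_U^T : V_T → V_U`. -/
def piUT (U T : Finset α) (h : U ⊆ T) : Vspace T →ₗ[ℂ] Vspace U :=
  Submodule.mapQ (constSub T) (constSub U) (restr U T h) (by
    rw [constSub, Submodule.span_le, Set.singleton_subset_iff, SetLike.mem_coe,
      Submodule.mem_comap]
    exact Submodule.subset_span rfl)

/-- Membership in `𝓜̄_L`: a family of one-dimensional subspaces `M_T ≤ V_T`
(`T ∈ L`) such that `M_T ≤ (π_U^T)⁻¹(M_U)` whenever `U ⊆ T` in `L`. -/
def MemMbar (L : Finset (Finset α)) (M : (T : ↥L) → Submodule ℂ (Vspace T.1)) : Prop :=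
  (∀ T, Module.finrank ℂ ↥(M T) = 1) ∧
    ∀ (U T : ↥L) (h : U.1 ⊆ T.1), M T ≤ Submodule.comap (piUT U.1 T.1 h) (M U)

/-- `type(M) = {U ∈ L : π_U^T(M_T) = 0 for every T ∈ L with T ⊋ U}`. -/
def typeOf (L : Finset (Finset α)) (M : (T : ↥L) → Submodule ℂ (Vspace T.1)) :
    Set (Finset α) :=
  {U | ∃ _ : U ∈ L, ∀ (T : ↥L) (h : U ⊂ T.1),
      Submodule.map (piUT U T.1 h.subset) (M T) = ⊥}

/-- Lemma 6.1.4: for a thicket `L` on `S` and `M ∈ 𝓜̄_L`, `type(M)` is an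
`S`-tree: it contains `S`, its members are subsets of `S` of size at least 2,
and its members are pairwise nested or disjoint. -/
theorem stmt8 (S : Finset α) (L : Finset (Finset α)) (hL : IsThicket S L)
    (M : (T : ↥L) → Submodule ℂ (Vspace T.1)) (hM : MemMbar L M) :
    S ∈ typeOf L M ∧
    (∀ U ∈ typeOf L M, U ⊆ S ∧ 2 ≤ U.card) ∧
    (∀ U ∈ typeOf L M, ∀ V ∈ typeOf L M, U ⊆ V ∨ V ⊆ U ∨ U ∩ V = ∅) := by
  obtain ⟨hSL, hsub, hcard, hunion⟩ := hL
  refine ⟨⟨hSL, fun T hT => absurd (hsub T.1 T.2) hT.2⟩, ?_, ?_⟩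
  · rintro U ⟨hUL, -⟩
    exact ⟨hsub U hUL, hcard U hUL⟩
  · rintro U ⟨hUL, hU⟩ V ⟨hVL, hV⟩
    by_contra hc
    push_neg at hc
    obtain ⟨hUV, hVU, hne⟩ := hc
    obtain ⟨x, hx⟩ := hne
    have hWL : U ∪ V ∈ L := hunion U hUL V hVL ⟨x, hx⟩
    have hUW : U ⊂ U ∪ V := Finset.ssubset_def.mpr
      ⟨Finset.subset_union_left, fun h => hVU (Finset.subset_union_right.trans h)⟩
    have hVW : V ⊂ U ∪ V := Finset.ssubset_def.mpr
      ⟨Finset.subset_union_right, fun h => hUV (Finset.subset_union_left.trans h)⟩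
    set W : ↥L := ⟨U ∪ V, hWL⟩ with hWdef
    have hMU := hU W hUW
    have hMV := hV W hVW
    have hbot : M W = ⊥ := by
      rw [eq_bot_iff]
      intro m hm
      obtain ⟨f, rfl⟩ := Submodule.Quotient.mk_surjective _ m
      have h1 : piUT U (U ∪ V) hUW.subset (Submodule.Quotient.mk f) = 0 := by
        rw [← Submodule.mem_bot ℂ, ← hMU]
        exact Submodule.mem_map_of_mem hm
      have h2 : piUT V (U ∪ V) hVW.subset (Submodule.Quotient.mk f) = 0 := by
        rw [← Submodule.mem_bot ℂ, ← hMV]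
        exact Submodule.mem_map_of_mem hm
      rw [piUT, Submodule.mapQ_apply, Submodule.Quotient.mk_eq_zero, constSub,
        Submodule.mem_span_singleton] at h1 h2
      obtain ⟨a, ha⟩ := h1
      obtain ⟨b, hb⟩ := h2
      have hxU : x ∈ U := (Finset.mem_inter.mp hx).1
      have hxV : x ∈ V := (Finset.mem_inter.mp hx).2
      have hax : a = f ⟨x, hUW.subset hxU⟩ := by
        have := congrFun ha ⟨x, hxU⟩
        simpa [restr, LinearMap.funLeft_apply] using this
      have hbx : b = f ⟨x, hVW.subset hxV⟩ := by
        have := congrFun hb ⟨x, hxV⟩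
        simpa [restr, LinearMap.funLeft_apply] using this
      have hmem : Submodule.Quotient.mk (p := constSub (U ∪ V)) f = 0 := by
        rw [Submodule.Quotient.mk_eq_zero, constSub, Submodule.mem_span_singleton]
        refine ⟨a, ?_⟩
        funext w
        rcases Finset.mem_union.mp w.2 with hw | hw
        · have := congrFun ha ⟨w.1, hw⟩
          simpa [restr, LinearMap.funLeft_apply] using this
        · have := congrFun hb ⟨w.1, hw⟩
          have hab : a = b := by rw [hax, hbx]
          rw [hab]
          simpa [restr, LinearMap.funLeft_apply] using this
      simp [hmem]
    have hfr := hM.1 W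
    rw [hbot] at hfr
    simp at hfr

end
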